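/- Let S be a k-algebra and 𝒞 ⊆ Z(S) a multiplicative set of central regular elements. Then the central localization S[𝒞⁻¹] is growth equivalent to S. -/

import Mathlib

open scoped ENNReal

/-- The `k`-span of all products of at most `n` elements of `X`. -/
def wordSpan (k : Type*) [Field k] (S : Type*) [Ring S] [Algebra k S]
    (X : Set S) (n : ℕ) : Submodule k S :=
  Submodule.span k {x | ∃ l : List S, l.length ≤ n ∧ (∀ a ∈ l, a ∈ X) ∧ l.prod = x}

/-- The growth function `n ↦ dim_k 𝒳⁽ⁿ⁾` of a finite subset of an algebra. -/
noncomputable def growthFn (k : Type*) [Field k] (S : Type*) [Ring S] [Algebra k S]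
    (X : Finset S) (n : ℕ) : ℕ :=
  Module.finrank k (wordSpan k S (X : Set S) n)

/-- The growth relation `S ⪯ T`. -/
def growthLE (k : Type*) [Field k] (S T : Type*) [Ring S] [Algebra k S]
    [Ring T] [Algebra k T] : Prop :=
  ∀ X : Finset S, ∃ (Y : Finset T) (K : ℕ), 0 < K ∧
    ∀ n : ℕ, growthFn k S X n ≤ K * growthFn k T Y n

/-- Growth equivalence `S ≡ T`. -/
def growthEquiv (k : Type*) [Field k] (S T : Type*) [Ring S] [Algebra k S]
    [Ring T] [Algebra k T] : Prop :=
  growthLE k S T ∧ growthLE k T S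

/-- The Gelfand–Kirillov dimension of a `k`-algebra. -/
noncomputable def gkDim (k : Type*) [Field k] (S : Type*) [Ring S] [Algebra k S] : ℝ≥0∞ :=
  ⨆ X : Finset S, Filter.limsup
    (fun n : ℕ => ENNReal.ofReal (Real.log (growthFn k S X n) / Real.log n)) Filter.atTop

section Aux

variable {k : Type*} [Field k] {S : Type*} [Ring S] [Algebra k S]
  {L : Type*} [Ring L] [Algebra k L]

/-- The set of products of at most `n` elements of a finite set is finite. -/
lemma wordSet_finite (X : Finset S) (n : ℕ) :
    {x : S | ∃ l : List S, l.length ≤ n ∧ (∀ a ∈ l, a ∈ (X : Set S)) ∧ l.prod = x}.Finite := by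
  classical
  have h : {x : S | ∃ l : List S, l.length ≤ n ∧ (∀ a ∈ l, a ∈ (X : Set S)) ∧ l.prod = x} ⊆
      (fun l : List X => (l.map (fun a : X => (a : S))).prod) '' {l | l.length ≤ n} := by
    rintro x ⟨l, hlen, hmem, rfl⟩
    refine ⟨l.pmap (fun a ha => (⟨a, ha⟩ : X)) hmem, by simpa using hlen, ?_⟩
    simp [List.map_pmap]
  exact ((List.finite_length_le X n).image _).subset h

lemma wordSpan_fd (X : Finset S) (n : ℕ) :
    FiniteDimensional k (wordSpan k S (X : Set S) n) :=
  FiniteDimensional.span_of_finite k (wordSet_finite X n)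

lemma exists_list_preimage (f : S →ₐ[k] L) (X : Set S) :
    ∀ l : List L, (∀ a ∈ l, a ∈ f '' X) → ∃ m : List S, (∀ a ∈ m, a ∈ X) ∧ m.map f = l := by
  intro l
  induction l with
  | nil => exact fun _ => ⟨[], by simp, rfl⟩
  | cons a l ih =>
    intro h
    obtain ⟨s, hs, hfs⟩ := h a List.mem_cons_self
    obtain ⟨m, hm, hmap⟩ := ih fun b hb => h b (List.mem_cons_of_mem a hb)
    refine ⟨s :: m, ?_, by simp [hmap, hfs]⟩
    intro b hb
    rcases List.mem_cons.1 hb with rfl | hb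
    · exact hs
    · exact hm b hb

lemma wordSpan_map (f : S →ₐ[k] L) (X : Set S) (n : ℕ) :
    (wordSpan k S X n).map f.toLinearMap = wordSpan k L (f '' X) n := by
  rw [wordSpan, wordSpan, Submodule.map_span]
  congr 1
  ext x
  constructor
  · rintro ⟨y, ⟨l, hlen, hmem, rfl⟩, rfl⟩
    refine ⟨l.map f, by simpa using hlen, ?_, ?_⟩
    · intro b hb
      obtain ⟨a, ha, rfl⟩ := List.mem_map.1 hb
      exact ⟨a, hmem a ha, rfl⟩
    · simpa using (map_list_prod f l).symm
  · rintro ⟨l, hlen, hmem, rfl⟩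
    obtain ⟨m, hm, rfl⟩ := exists_list_preimage f X l hmem
    refine ⟨m.prod, ⟨m, by simpa using hlen, hm, rfl⟩, ?_⟩
    simpa using map_list_prod f m

lemma finrank_map_injective (f : S →ₗ[k] L) (hf : Function.Injective f) (p : Submodule k S) :
    Module.finrank k (p.map f) = Module.finrank k p :=
  (LinearEquiv.finrank_eq (Submodule.equivMapOfInjective f hf p)).symm

end Aux

/-- A central localization of `S` at a multiplicative set of central regular elements is
growth equivalent to `S`. -/
theorem stmt14 (k : Type*) [Field k] (S : Type*) [Ring S] [Algebra k S]
    (C : Submonoid S) (hcen : (C : Set S) ⊆ Set.center S)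
    (hreg : (C : Set S) ⊆ nonZeroDivisors S)
    (L : Type*) [Ring L] [Algebra k L]
    (f : S →ₐ[k] L) (hinj : Function.Injective f)
    (hunit : ∀ c ∈ C, IsUnit (f c))
    (hfrac : ∀ y : L, ∃ s : S, ∃ c ∈ C, y * f c = f s) :
    growthEquiv k S L := by
  classical
  have hinj' : Function.Injective f.toLinearMap := hinj
  constructor
  · -- S ⪯ L
    intro X
    refine ⟨X.image f, 1, one_pos, fun n => ?_⟩
    rw [one_mul]
    unfold growthFn
    rw [Finset.coe_image, ← wordSpan_map f (X : Set S) n,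
      finrank_map_injective f.toLinearMap hinj']
  · -- L ⪯ S
    intro Y
    -- images of C are central in L
    have hcent : ∀ c' ∈ C, ∀ z : L, z * f c' = f c' * z := by
      intro c' hc' z
      obtain ⟨s', c'', hc'', hz⟩ := hfrac z
      apply (hunit c'' hc'').mul_right_cancel
      calc z * f c' * f c'' = z * f (c' * c'') := by rw [mul_assoc, map_mul]
        _ = z * f c'' * f c' := by
            rw [← (hcen hc'').comm c', map_mul, ← mul_assoc]
        _ = f (s' * c') := by rw [hz, ← map_mul]
        _ = f c' * f s' := by rw [← map_mul, (hcen hc').comm s']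
        _ = f c' * z * f c'' := by rw [← hz, ← mul_assoc]
    -- choose numerators and denominators
    choose sd cd hcd heq using hfrac
    -- elements of C as central elements
    set cZ : L → Submonoid.center S := fun y => ⟨cd y, hcen (hcd y)⟩ with hcZ
    set c : Submonoid.center S := ∏ y ∈ Y, cZ y with hc
    have hcC : (c : S) ∈ C := by
      refine Finset.prod_induction cZ (fun z : Submonoid.center S => (z : S) ∈ C)
        (fun a b ha hb => mul_mem ha hb) (one_mem C) (fun y _ => hcd y)
    set t : L → S := fun y => sd y * (↑(∏ y' ∈ Y.erase y, cZ y') : S) with ht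
    have hkey : ∀ y ∈ Y, y * f c = f (t y) := by
      intro y hy
      have hsplit : (c : S) = cd y * (↑(∏ y' ∈ Y.erase y, cZ y') : S) := by
        rw [hc, ← Finset.mul_prod_erase Y cZ hy]; rfl
      rw [hsplit, map_mul, ← mul_assoc, heq y, ← map_mul]
    set X : Finset S := insert (c : S) (Y.image t) with hX
    refine ⟨X, 1, one_pos, fun n => ?_⟩
    rw [one_mul]
    -- main word identity
    have hc1 : ∀ z : L, z * f c = f c * z := hcent c hcC
    have hword : ∀ l : List L, (∀ a ∈ l, a ∈ Y) →
        l.prod * (f c) ^ l.length = f ((l.map t).prod) := by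
      intro l
      induction l with
      | nil => simp
      | cons a l ih =>
        intro h
        have ha := h a List.mem_cons_self
        have hl := ih fun b hb => h b (List.mem_cons_of_mem a hb)
        calc (a :: l).prod * f c ^ (a :: l).length
            = a * f c * (l.prod * f c ^ l.length) := by
              simp only [List.prod_cons, List.length_cons, pow_succ]
              rw [mul_assoc, mul_assoc, ← hc1 (l.prod * f ↑c ^ l.length), mul_assoc]
          _ = f (t a) * f ((l.map t).prod) := by rw [hkey a ha, hl]
          _ = f (((a :: l).map t).prod) := by rw [← map_mul]; simp
    -- the right-multiplication linear map
    set μ : L →ₗ[k] L := LinearMap.mulRight k ((f c) ^ n) with hμ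
    have hμinj : Function.Injective μ := by
      intro a b hab
      exact ((hunit c hcC).pow n).mul_right_cancel hab
    have hsub : (wordSpan k L (Y : Set L) n).map μ ≤
        (wordSpan k S (X : Set S) n).map f.toLinearMap := by
      rw [wordSpan, Submodule.map_span]
      refine Submodule.span_le.2 ?_
      rintro _ ⟨x, ⟨l, hlen, hmem, rfl⟩, rfl⟩
      refine Submodule.mem_map.2
        ⟨((l.map t) ++ List.replicate (n - l.length) (c : S)).prod, ?_, ?_⟩
      · apply Submodule.subset_span
        refine ⟨(l.map t) ++ List.replicate (n - l.length) (c : S), ?_, ?_, rfl⟩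
        · simp [Nat.add_sub_cancel' hlen]
        · intro a hamem
          rcases List.mem_append.1 hamem with hamem | hamem
          · obtain ⟨b, hb, rfl⟩ := List.mem_map.1 hamem
            exact Finset.mem_coe.2 (by
              rw [hX]; exact Finset.mem_insert_of_mem (Finset.mem_image_of_mem t (hmem b hb)))
          · have : a = (c : S) := List.eq_of_mem_replicate hamem
            subst this
            exact Finset.mem_coe.2 (by rw [hX]; exact Finset.mem_insert_self _ _)
      · show f _ = μ l.prod
        rw [List.prod_append, map_mul, ← hword l hmem, List.prod_replicate, map_pow]
        simp only [hμ, LinearMap.mulRight_apply]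
        rw [mul_assoc, ← pow_add, Nat.add_sub_cancel' hlen]
    have fd : FiniteDimensional k (wordSpan k S (X : Set S) n) := wordSpan_fd X n
    calc growthFn k L Y n
        = Module.finrank k ((wordSpan k L (Y : Set L) n).map μ) :=
          (finrank_map_injective μ hμinj _).symm
      _ ≤ Module.finrank k ((wordSpan k S (X : Set S) n).map f.toLinearMap) :=
          Submodule.finrank_mono hsub
      _ = growthFn k S X n := finrank_map_injective _ hinj' _
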